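/- Let n, d be natural numbers with 1 ≤ n and 1 ≤ d, and let ρ be a positive semidefinite complex matrix of trace 1 indexed by Fin n → Fin d which is symmetric, i.e. for every permutation π of Fin n, Q_π * ρ * Q_π ᴴ = ρ, where Q_π is the permutation matrix acting on ℂ^{(Fin n → Fin d)} by permuting the tensor factors according to π (i.e. sending the basis vector indexed by a : Fin n → Fin d to the basis vector indexed by a ∘ π⁻¹). Then there exist a finite index set, nonnegative real numbers r_i, and nonzero subspaces W_i of the Euclidean space ℂ^{(Fin n → Fin d)} such that: each W_i is invariant under Q_π for every permutation π of Fin n; each W_i is minimal with this property (it contains no nonzero proper subspace invariant under all Q_π); and ρ equals ∑_i r_i · P_i, where P_i is the matrix of the orthogonal projection onto W_i. -/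

import Mathlib

open Matrix ComplexOrder

/-- The permutation matrix on `(ℂ^d)^{⊗n}` permuting the tensor factors according to
`π`: it sends the standard basis vector indexed by `a : Fin n → Fin d` to the basis
vector indexed by `a ∘ π⁻¹`. -/
noncomputable def permTensorMatrix (n d : ℕ) (π : Equiv.Perm (Fin n)) :
    Matrix (Fin n → Fin d) (Fin n → Fin d) ℂ :=
  Matrix.of fun a b => if a = b ∘ ⇑π⁻¹ then 1 else 0

/-- The matrix (in the standard basis) of the orthogonal projection onto a subspace `W`
of the Euclidean space `ℂ^ι`. -/
noncomputable def projMatrix {ι : Type*} [Fintype ι] [DecidableEq ι]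
    (W : Submodule ℂ (EuclideanSpace ℂ ι)) : Matrix ι ι ℂ :=
  Matrix.toEuclideanLin.symm ((W.subtypeL.comp W.orthogonalProjection).toLinearMap)

namespace SymmAux

variable {n d : ℕ}

lemma comp_inv_iff (π : Equiv.Perm (Fin n)) (a f : Fin n → Fin d) :
    a = f ∘ ⇑π⁻¹ ↔ a ∘ ⇑π = f := by
  constructor
  · rintro rfl; ext i; simp
  · rintro rfl; ext i; simp

lemma permTensor_conjT (π : Equiv.Perm (Fin n)) :
    (permTensorMatrix n d π)ᴴ = permTensorMatrix n d π⁻¹ := by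
  ext a b
  simp only [permTensorMatrix, conjTranspose_apply, of_apply]
  have h : (b = a ∘ ⇑π⁻¹) ↔ (a = b ∘ ⇑π⁻¹⁻¹) := by
    constructor <;> rintro rfl <;> ext i <;> simp
  rw [if_congr h rfl rfl]
  split_ifs <;> simp

lemma permTensor_mul (π σ : Equiv.Perm (Fin n)) :
    permTensorMatrix n d π * permTensorMatrix n d σ = permTensorMatrix n d (π * σ) := by
  ext a c
  simp only [permTensorMatrix, mul_apply, of_apply, ite_mul, one_mul, zero_mul]
  have key : ∀ b : Fin n → Fin d, (a = b ∘ ⇑π⁻¹) ↔ (b = a ∘ ⇑π) := by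
    intro b; rw [comp_inv_iff, eq_comm]
  simp_rw [key]
  rw [Finset.sum_ite_eq' Finset.univ (a ∘ ⇑π) (fun b => if b = c ∘ ⇑σ⁻¹ then (1:ℂ) else 0)]
  simp only [Finset.mem_univ, if_true]
  have h2 : (a ∘ ⇑π = c ∘ ⇑σ⁻¹) ↔ (a = c ∘ ⇑(π * σ)⁻¹) := by
    rw [comp_inv_iff σ (a ∘ ⇑π) c, comp_inv_iff (π * σ) a c,
      show a ∘ ⇑(π * σ) = (a ∘ ⇑π) ∘ ⇑σ from by ext i; simp [Equiv.Perm.coe_mul]]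
  rw [if_congr h2 rfl rfl]

lemma permTensor_one : permTensorMatrix n d 1 = 1 := by
  ext a b
  simp [permTensorMatrix, Matrix.one_apply]

lemma permTensor_mul_conjT (π : Equiv.Perm (Fin n)) :
    permTensorMatrix n d π * (permTensorMatrix n d π)ᴴ = 1 := by
  rw [permTensor_conjT, permTensor_mul, mul_inv_cancel, permTensor_one]

lemma permTensor_conjT_mul (π : Equiv.Perm (Fin n)) :
    (permTensorMatrix n d π)ᴴ * permTensorMatrix n d π = 1 := by
  rw [permTensor_conjT, permTensor_mul, inv_mul_cancel, permTensor_one]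

lemma toEuclideanLin_mul_apply {ι : Type*} [Fintype ι] [DecidableEq ι]
    (A B : Matrix ι ι ℂ) (x : EuclideanSpace ℂ ι) :
    Matrix.toEuclideanLin (A * B) x = Matrix.toEuclideanLin A (Matrix.toEuclideanLin B x) := by
  simp [Matrix.toEuclideanLin_apply, Matrix.mulVec_mulVec]

end SymmAux

namespace SymmAux

open Module Submodule

variable {n d : ℕ}

local notation "E" => EuclideanSpace ℂ (Fin n → Fin d)

/-- invariance of a subspace under all permutation operators -/
def Inv (n d : ℕ) (V : Submodule ℂ (EuclideanSpace ℂ (Fin n → Fin d))) : Prop :=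
  ∀ π : Equiv.Perm (Fin n), ∀ x ∈ V, Matrix.toEuclideanLin (permTensorMatrix n d π) x ∈ V

lemma inv_orthogonal {U : Submodule ℂ E} (hU : Inv n d U) (π : Equiv.Perm (Fin n))
    {x : E} (hx : x ∈ Uᗮ) : Matrix.toEuclideanLin (permTensorMatrix n d π) x ∈ Uᗮ := by
  rw [Submodule.mem_orthogonal]
  intro u hu
  have hadj : Matrix.toEuclideanLin (permTensorMatrix n d π⁻¹) =
      LinearMap.adjoint (Matrix.toEuclideanLin (permTensorMatrix n d π)) := by
    rw [← permTensor_conjT, Matrix.toEuclideanLin_conjTranspose_eq_adjoint]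
  have := LinearMap.adjoint_inner_left (Matrix.toEuclideanLin (permTensorMatrix n d π)) x u
  rw [← this, ← hadj]
  exact (Submodule.mem_orthogonal U x).mp hx _ (hU π⁻¹ u hu)

theorem decompose_inv : ∀ (m : ℕ)
    (V : Submodule ℂ (EuclideanSpace ℂ (Fin n → Fin d))),
    Module.finrank ℂ V = m → Inv n d V →
    ∃ (k : ℕ) (W : Fin k → Submodule ℂ (EuclideanSpace ℂ (Fin n → Fin d))),
      (∀ i, W i ≠ ⊥) ∧
      (∀ i, Inv n d (W i)) ∧
      (∀ i, ∀ W' : Submodule ℂ (EuclideanSpace ℂ (Fin n → Fin d)), W' ≤ W i →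
        Inv n d W' → W' = ⊥ ∨ W' = W i) ∧
      (∀ x : EuclideanSpace ℂ (Fin n → Fin d), (orthogonalProjection V x : EuclideanSpace ℂ (Fin n → Fin d)) =
        ∑ i, (orthogonalProjection (W i) x : EuclideanSpace ℂ (Fin n → Fin d))) := by
  intro m
  induction m using Nat.strong_induction_on with
  | _ m IH =>
    intro V hrank hVinv
    rcases eq_or_ne V ⊥ with rfl | hVne
    · refine ⟨0, Fin.elim0, fun i => i.elim0, fun i => i.elim0, fun i => i.elim0, fun x => ?_⟩
      simp [orthogonalProjection_bot]
    · -- choose a minimal-rank nonzero invariant subspace of V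
      set S : Set ℕ := {j | ∃ U : Submodule ℂ (EuclideanSpace ℂ (Fin n → Fin d)),
        U ≤ V ∧ Inv n d U ∧ U ≠ ⊥ ∧ Module.finrank ℂ U = j} with hS
      have hSne : S.Nonempty := ⟨Module.finrank ℂ V, V, le_rfl, hVinv, hVne, rfl⟩
      obtain ⟨U, hUV, hUinv, hUne, hUrank⟩ := Nat.sInf_mem hSne
      have hUmin : ∀ W' : Submodule ℂ (EuclideanSpace ℂ (Fin n → Fin d)), W' ≤ U →
          Inv n d W' → W' = ⊥ ∨ W' = U := by
        intro W' hle hinv'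
        rcases eq_or_ne W' ⊥ with h | h
        · exact Or.inl h
        · refine Or.inr (Submodule.eq_of_le_of_finrank_le hle ?_)
          rw [hUrank]
          exact Nat.sInf_le ⟨W', hle.trans hUV, hinv', h, rfl⟩
      set V' : Submodule ℂ (EuclideanSpace ℂ (Fin n → Fin d)) := Uᗮ ⊓ V with hV'
      have hV'inv : Inv n d V' := fun π x hx =>
        ⟨inv_orthogonal hUinv π hx.1, hVinv π x hx.2⟩
      have hsup : U ⊔ V' = V := by
        apply le_antisymm (sup_le hUV inf_le_right)
        intro x hx
        have hmem1 : (orthogonalProjection U x : E) ∈ U := SetLike.coe_mem _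
        have hmem2 : x - orthogonalProjection U x ∈ V' :=
          ⟨sub_starProjection_mem_orthogonal x, V.sub_mem hx (hUV hmem1)⟩
        have := Submodule.add_mem_sup hmem1 hmem2
        simpa using this
      have hdisj : U ⊓ V' = ⊥ := by
        apply le_bot_iff.mp
        intro x hx
        have : x ∈ U ⊓ Uᗮ := ⟨hx.1, hx.2.1⟩
        rwa [← disjoint_iff.mp (Submodule.orthogonal_disjoint U)]
      have hrank' : Module.finrank ℂ U + Module.finrank ℂ V' = m := by
        have := Submodule.finrank_sup_add_finrank_inf_eq U V'
        rw [hsup, hdisj, hrank, finrank_bot, add_zero] at this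
        omega
      have hUpos : 0 < Module.finrank ℂ U := by
        rcases Nat.eq_zero_or_pos (Module.finrank ℂ U) with h | h
        · exact absurd (Submodule.finrank_eq_zero.mp h) hUne
        · exact h
      have hlt : Module.finrank ℂ V' < m := by omega
      obtain ⟨k, W, hW1, hW2, hW3, hW4⟩ := IH _ hlt V' rfl hV'inv
      -- projection onto V is projection onto U plus projection onto V'
      have hproj : ∀ x : E, (orthogonalProjection V x : E) =
          (orthogonalProjection U x : E) + (orthogonalProjection V' x : E) := by
        intro x
        refine (eq_starProjection_of_mem_orthogonal ?_ ?_ : V.starProjection x = _)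
        · have hV'leV : V' ≤ V := inf_le_right
          exact V.add_mem (hUV (SetLike.coe_mem _)) (hV'leV (SetLike.coe_mem _))
        · rw [Submodule.mem_orthogonal]
          intro w hw
          rw [← hsup] at hw
          obtain ⟨u, hu, v', hv', rfl⟩ := Submodule.mem_sup.mp hw
          have h1 : (inner ℂ u (x - orthogonalProjection U x) : ℂ) = 0 :=
            (sub_starProjection_mem_orthogonal (K := U) x) u hu
          have hV'leU : V' ≤ Uᗮ := inf_le_left
          have h2 : (inner ℂ u ((orthogonalProjection V' x : E)) : ℂ) = 0 := by
            have : (orthogonalProjection V' x : E) ∈ Uᗮ := hV'leU (SetLike.coe_mem _)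
            exact this u hu
          have h3 : (inner ℂ v' (x - orthogonalProjection V' x) : ℂ) = 0 :=
            (sub_starProjection_mem_orthogonal (K := V') x) v' hv'
          have h4 : (inner ℂ v' ((orthogonalProjection U x : E)) : ℂ) = 0 := by
            have hv'o : v' ∈ Uᗮ := hV'leU hv'
            rw [inner_eq_zero_symm]
            exact hv'o _ (SetLike.coe_mem _)
          have expand : x - ((orthogonalProjection U x : E) + (orthogonalProjection V' x : E)) =
              (x - orthogonalProjection U x) - (orthogonalProjection V' x : E) := by abel
          rw [expand]
          simp only [inner_add_left, inner_sub_right]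
          rw [inner_sub_right] at h1 h3
          linear_combination h1 - h2 + h3 - h4
      refine ⟨k + 1, Fin.cons U W, ?_, ?_, ?_, ?_⟩
      · intro i
        refine Fin.cases ?_ ?_ i
        · simpa using hUne
        · intro j; simpa using hW1 j
      · intro i
        refine Fin.cases ?_ ?_ i
        · simpa using hUinv
        · intro j; simpa using hW2 j
      · intro i
        refine Fin.cases ?_ ?_ i
        · simpa using hUmin
        · intro j; simpa using hW3 j
      · intro x
        rw [hproj x, hW4 x, Fin.sum_univ_succ, Fin.cons_zero]
        congr 1

end SymmAux

/-- **Symmetric state characterisation.** Every permutation-invariant state on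
`(ℂ^d)^{⊗n}` is a nonnegative combination of orthogonal projectors onto minimal
subspaces invariant under all tensor-factor permutations `Q_π`, i.e. onto irreps of the
symmetric group. -/
theorem symmetric_state_characterisation (n d : ℕ) (hn : 1 ≤ n) (hd : 1 ≤ d)
    (ρ : Matrix (Fin n → Fin d) (Fin n → Fin d) ℂ)
    (hpsd : ρ.PosSemidef) (htr : ρ.trace = 1)
    (hinv : ∀ π : Equiv.Perm (Fin n),
      permTensorMatrix n d π * ρ * (permTensorMatrix n d π)ᴴ = ρ) :
    ∃ (ι : Type) (_ : Fintype ι) (r : ι → ℝ)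
      (W : ι → Submodule ℂ (EuclideanSpace ℂ (Fin n → Fin d))),
      (∀ i, 0 ≤ r i) ∧
      (∀ i, W i ≠ ⊥) ∧
      (∀ i, ∀ π : Equiv.Perm (Fin n),
        ∀ x ∈ W i, Matrix.toEuclideanLin (permTensorMatrix n d π) x ∈ W i) ∧
      (∀ i, ∀ W' : Submodule ℂ (EuclideanSpace ℂ (Fin n → Fin d)), W' ≤ W i →
        (∀ π : Equiv.Perm (Fin n),
          ∀ x ∈ W', Matrix.toEuclideanLin (permTensorMatrix n d π) x ∈ W') →
        W' = ⊥ ∨ W' = W i) ∧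
      ρ = ∑ i, (r i : ℂ) • projMatrix (W i) := by
  classical
  set T : EuclideanSpace ℂ (Fin n → Fin d) →ₗ[ℂ] EuclideanSpace ℂ (Fin n → Fin d) :=
    Matrix.toEuclideanLin ρ with hT_def
  have hT : T.IsSymmetric := Matrix.isHermitian_iff_isSymmetric.mp hpsd.1
  have hcomm : ∀ π, permTensorMatrix n d π * ρ = ρ * permTensorMatrix n d π := by
    intro π
    calc permTensorMatrix n d π * ρ
        = permTensorMatrix n d π * ρ * ((permTensorMatrix n d π)ᴴ * permTensorMatrix n d π) := by
          rw [SymmAux.permTensor_conjT_mul, mul_one]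
      _ = (permTensorMatrix n d π * ρ * (permTensorMatrix n d π)ᴴ) * permTensorMatrix n d π := by
          rw [mul_assoc (permTensorMatrix n d π * ρ)]
      _ = ρ * permTensorMatrix n d π := by rw [hinv π]
  have heig : ∀ μ : ℂ, SymmAux.Inv n d (Module.End.eigenspace T μ) := by
    intro μ π x hx
    rw [Module.End.mem_eigenspace_iff] at hx ⊢
    have hcomp : T (Matrix.toEuclideanLin (permTensorMatrix n d π) x)
        = Matrix.toEuclideanLin (permTensorMatrix n d π) (T x) := by
      rw [hT_def, ← SymmAux.toEuclideanLin_mul_apply, ← SymmAux.toEuclideanLin_mul_apply, hcomm]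
    rw [hcomp, hx, _root_.map_smul]
  have hreal : ∀ μ : Module.End.Eigenvalues T, ((μ.1.re : ℂ)) = μ.1 := by
    intro μ
    exact Complex.conj_eq_iff_re.mp (hT.conj_eigenvalue_eq_self μ.prop)
  have hnn : ∀ x : EuclideanSpace ℂ (Fin n → Fin d), 0 ≤ RCLike.re (inner ℂ x (T x) : ℂ) := by
    intro x
    have h0 := hpsd.dotProduct_mulVec_nonneg ((WithLp.equiv 2 ((Fin n → Fin d) → ℂ)) x)
    have hiq : (inner ℂ x (T x) : ℂ)
        = dotProduct (star ((WithLp.equiv 2 ((Fin n → Fin d) → ℂ)) x)) (ρ *ᵥ (WithLp.equiv 2 ((Fin n → Fin d) → ℂ)) x) := by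
      simp [hT_def, PiLp.inner_apply, Matrix.toEuclideanLin_apply, dotProduct,
        RCLike.inner_apply, Matrix.mulVec, mul_comm]
    rw [hiq]
    exact (Complex.le_def.mp h0).1
  have hrge : ∀ μ : Module.End.Eigenvalues T, 0 ≤ μ.1.re := by
    intro μ
    have hμ : Module.End.HasEigenvalue T ((μ.1.re : ℝ) : ℂ) := by
      rw [hreal μ]; exact μ.prop
    exact eigenvalue_nonneg_of_nonneg hμ hnn
  have hdec := fun μ : Module.End.Eigenvalues T =>
    SymmAux.decompose_inv _ (Module.End.eigenspace T μ.1) rfl (heig μ.1)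
  choose k W hW1 hW2 hW3 hW4 using hdec
  have hsum : ∀ x : EuclideanSpace ℂ (Fin n → Fin d),
      T x = ∑ μ : Module.End.Eigenvalues T,
        μ.1 • (Submodule.orthogonalProjection (Module.End.eigenspace T μ.1) x :
          EuclideanSpace ℂ (Fin n → Fin d)) := by
    intro x
    have hx : (∑ μ : Module.End.Eigenvalues T,
        ((Submodule.orthogonalProjection (Module.End.eigenspace T μ.1) x :
          EuclideanSpace ℂ (Fin n → Fin d)))) = x :=
      hT.orthogonalFamily_eigenspaces'.sum_projection_of_mem_iSup x
        ((Submodule.orthogonal_eq_bot_iff.mp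
          hT.orthogonalComplement_iSup_eigenspaces_eq_bot').ge Submodule.mem_top)
    conv_lhs => rw [← hx]
    rw [map_sum]
    refine Finset.sum_congr rfl fun μ _ => ?_
    exact Module.End.mem_eigenspace_iff.mp (SetLike.coe_mem _)
  refine ⟨Σ μ : Module.End.Eigenvalues T, Fin (k μ), inferInstance,
    fun p => p.1.1.re, fun p => W p.1 p.2, fun p => hrge p.1, fun p => hW1 p.1 p.2,
    fun p => hW2 p.1 p.2, fun p => hW3 p.1 p.2, ?_⟩
  refine Matrix.toEuclideanLin.injective (LinearMap.ext fun x => ?_)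
  have hRHS : Matrix.toEuclideanLin
      (∑ p : Σ μ : Module.End.Eigenvalues T, Fin (k μ),
        ((p.1.1.re : ℂ)) • projMatrix (W p.1 p.2)) x
      = ∑ p : Σ μ : Module.End.Eigenvalues T, Fin (k μ),
        (p.1.1.re : ℂ) • (Submodule.orthogonalProjection (W p.1 p.2) x :
          EuclideanSpace ℂ (Fin n → Fin d)) := by
    rw [map_sum, LinearMap.sum_apply]
    refine Finset.sum_congr rfl fun p _ => ?_
    rw [_root_.map_smul, LinearMap.smul_apply, projMatrix, LinearEquiv.apply_symm_apply]
    rfl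
  rw [hRHS, hsum x]
  have hsplit : ∀ μ : Module.End.Eigenvalues T,
      (μ.1 : ℂ) • (Submodule.orthogonalProjection (Module.End.eigenspace T μ.1) x :
        EuclideanSpace ℂ (Fin n → Fin d))
      = ∑ i : Fin (k μ), (μ.1 : ℂ) • (Submodule.orthogonalProjection (W μ i) x :
        EuclideanSpace ℂ (Fin n → Fin d)) := by
    intro μ; rw [hW4 μ x, Finset.smul_sum]
  rw [Finset.sum_congr rfl fun μ _ => hsplit μ]
  have hco : ∀ p : (μ : Module.End.Eigenvalues T) × Fin (k μ),
      ((p.1.1.re : ℂ)) • (Submodule.orthogonalProjection (W p.1 p.2) x :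
        EuclideanSpace ℂ (Fin n → Fin d))
      = (p.1.1 : ℂ) • (Submodule.orthogonalProjection (W p.1 p.2) x :
        EuclideanSpace ℂ (Fin n → Fin d)) := fun p => by rw [hreal p.1]
  rw [Finset.sum_congr rfl fun p _ => hco p, ← Finset.univ_sigma_univ, Finset.sum_sigma]
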